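/- Assume the Continuum Hypothesis. Then there exists X ⊆ ℝ with positive Lebesgue outer measure such that C ∩ (X + t) is countable for every t ∈ ℝ, where C is the standard middle-thirds Cantor set. Consequently μ_Cantor(X+t) = 0 for every t. -/

import Mathlib

open MeasureTheory Pointwise

-- volume of Cantor set is zero
lemma volume_preCantorSet_le (n : ℕ) : volume (preCantorSet n) ≤ (2/3 : ENNReal) ^ n := by
  induction n with
  | zero => simp [preCantorSet, Real.volume_Icc]
  | succ n ih =>
    rw [preCantorSet_succ]
    refine (measure_union_le _ _).trans ?_
    have h1 : (· / 3 : ℝ → ℝ) '' preCantorSet n = (3⁻¹ : ℝ) • preCantorSet n := by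
      ext y
      simp only [Set.mem_image, Set.mem_smul_set, smul_eq_mul]
      constructor
      · rintro ⟨x, hx, rfl⟩; exact ⟨x, hx, by ring⟩
      · rintro ⟨x, hx, rfl⟩; exact ⟨x, hx, by ring⟩
    have h2 : (fun x : ℝ => (2 + x) / 3) '' preCantorSet n
        = (3⁻¹ : ℝ) • ((2 : ℝ) +ᵥ preCantorSet n) := by
      ext y
      simp only [Set.mem_image, Set.mem_smul_set, Set.mem_vadd_set, smul_eq_mul,
        vadd_eq_add]
      constructor
      · rintro ⟨x, hx, rfl⟩
        exact ⟨2 + x, ⟨x, hx, rfl⟩, by ring⟩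
      · rintro ⟨z, ⟨x, hx, rfl⟩, rfl⟩
        exact ⟨x, hx, by ring⟩
    rw [h1, h2, Measure.addHaar_smul, Measure.addHaar_smul, measure_vadd]
    have : (ENNReal.ofReal |(3:ℝ)⁻¹ ^ Module.finrank ℝ ℝ|) = 3⁻¹ := by
      rw [Module.finrank_self, pow_one, abs_of_nonneg (by norm_num : (0:ℝ) ≤ 3⁻¹),
        ENNReal.ofReal_inv_of_pos (by norm_num)]
      norm_num
    rw [this]
    calc 3⁻¹ * volume (preCantorSet n) + 3⁻¹ * volume (preCantorSet n)
        ≤ 3⁻¹ * (2/3)^n + 3⁻¹ * (2/3)^n := by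
          gcongr
      _ = (2/3 : ENNReal) ^ (n+1) := by
          rw [pow_succ, ENNReal.div_eq_inv_mul]
          ring

lemma volume_cantorSet : volume cantorSet = 0 := by
  have h : ∀ n, volume cantorSet ≤ (2/3 : ENNReal) ^ n := fun n =>
    (measure_mono (Set.iInter_subset _ n)).trans (volume_preCantorSet_le n)
  have ht : Filter.Tendsto (fun n : ℕ => (2/3 : ENNReal) ^ n) Filter.atTop (nhds 0) :=
    ENNReal.tendsto_pow_atTop_nhds_zero_of_lt_one (by
      rw [ENNReal.div_lt_iff (by norm_num) (by norm_num)]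
      norm_num)
  exact le_antisymm (ge_of_tendsto' ht h) zero_le

/-- Decode a code (a sequence of sets of rational pairs) into a Gδ set. -/
def decodeG (c : ℕ → Set (ℚ × ℚ)) : Set ℝ :=
  ⋂ n, ⋃ p ∈ c n, Set.Ioo (p.1 : ℝ) (p.2 : ℝ)

lemma exists_code {S : Set ℝ} (hS : volume S = 0) :
    ∃ c, S ⊆ decodeG c ∧ volume (decodeG c) = 0 := by
  have h0 : ∀ n : ℕ, ∃ U, S ⊆ U ∧ IsOpen U ∧ volume U < ((n : ENNReal) + 1)⁻¹ := by
    intro n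
    obtain ⟨U, hSU, hUo, hUlt⟩ := Set.exists_isOpen_lt_of_lt S ((n : ENNReal) + 1)⁻¹ (by
      rw [hS]
      exact ENNReal.inv_pos.mpr (by simp))
    exact ⟨U, hSU, hUo, hUlt⟩
  choose U hSU hUopen hUlt using h0
  set c := fun n => {p : ℚ × ℚ | Set.Ioo (p.1 : ℝ) (p.2 : ℝ) ⊆ U n} with hc
  have hUeq : ∀ n, (⋃ p ∈ c n, Set.Ioo (p.1 : ℝ) (p.2 : ℝ)) = U n := by
    intro n
    apply subset_antisymm
    · exact Set.iUnion₂_subset fun p hp => hp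
    · intro y hy
      obtain ⟨t, ht, hyt, htU⟩ :=
        Real.isTopologicalBasis_Ioo_rat.exists_subset_of_mem_open hy (hUopen n)
      simp only [Set.mem_iUnion, Set.mem_singleton_iff] at ht
      obtain ⟨a, b, _, rfl⟩ := ht
      exact Set.mem_biUnion (show (a, b) ∈ c n from htU) hyt
  have hsub : ∀ n, decodeG c ⊆ U n := by
    intro n
    refine (Set.iInter_subset _ n).trans ?_
    rw [hUeq n]
  refine ⟨c, Set.subset_iInter fun n => (hUeq n) ▸ hSU n, ?_⟩
  have hle : ∀ n : ℕ, volume (decodeG c) ≤ ((n : ENNReal) + 1)⁻¹ :=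
    fun n => le_of_lt (lt_of_le_of_lt (measure_mono (hsub n)) (hUlt n))
  by_contra h
  obtain ⟨n, hn⟩ := ENNReal.exists_inv_nat_lt h
  have h2 : ((n : ENNReal) + 1)⁻¹ ≤ (n : ENNReal)⁻¹ :=
    ENNReal.inv_le_inv.mpr le_self_add
  exact (((hle n).trans h2).not_gt hn)

lemma main_construction (hCH : (Cardinal.continuum : Cardinal.{0}) = Cardinal.aleph 1) :
    ∃ X : Set ℝ, volume X ≠ 0 ∧
      ∀ t : ℝ, (X ∩ (fun x => x + t) ⁻¹' cantorSet).Countable := by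
  classical
  let I := ℝ ⊕ (ℕ → Set (ℚ × ℚ))
  let N : I → Set ℝ := fun i =>
    Sum.rec (fun t => (fun x => x + t) ⁻¹' cantorSet)
      (fun c => if volume (decodeG c) = 0 then decodeG c else ∅) i
  have hN : ∀ i, volume (N i) = 0 := by
    rintro (t | c)
    · show volume ((fun x => x + t) ⁻¹' cantorSet) = 0
      rw [measure_preimage_add_right]
      exact volume_cantorSet
    · by_cases h : volume (decodeG c) = 0 <;> simp [N, h]
  have hmkI : Cardinal.mk I = Cardinal.aleph 1 := by
    have h1 : Cardinal.mk (ℕ → Set (ℚ × ℚ)) = Cardinal.continuum := by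
      rw [Cardinal.mk_arrow]
      simp only [Cardinal.mk_set, Cardinal.mk_eq_aleph0 (ℚ × ℚ), Cardinal.mk_eq_aleph0 ℕ,
        Cardinal.lift_id, Cardinal.lift_aleph0, Cardinal.two_power_aleph0]
      exact Cardinal.continuum_power_aleph0
    show Cardinal.mk (ℝ ⊕ (ℕ → Set (ℚ × ℚ))) = Cardinal.aleph 1
    simp only [Cardinal.mk_sum, Cardinal.mk_real, h1, Cardinal.lift_id]
    rw [Cardinal.continuum_add_self]
    exact hCH
  have hcard : Cardinal.mk I = Cardinal.mk (Cardinal.aleph 1).ord.ToType := by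
    rw [Cardinal.mk_toType, Cardinal.card_ord, hmkI]
  obtain ⟨e⟩ := Cardinal.eq.mp hcard
  have hcntIio : ∀ a : (Cardinal.aleph 1).ord.ToType, (Set.Iio a).Countable := by
    intro a
    rw [Cardinal.countable_iff_lt_aleph_one]
    exact Cardinal.mk_Iio_ord_toType a
  have hcnt : ∀ a : (Cardinal.aleph 1).ord.ToType, (Set.Iic a).Countable := by
    intro a
    have : Set.Iic a = insert a (Set.Iio a) := by
      ext b; simp [le_iff_lt_or_eq, or_comm]
    rw [this]
    exact (hcntIio a).insert a
  have hU : ∀ a : (Cardinal.aleph 1).ord.ToType,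
      volume (⋃ b ∈ Set.Iic a, N (e.symm b)) = 0 :=
    fun a => (measure_biUnion_null_iff (hcnt a)).2 fun b _ => hN _
  have hex : ∀ a : (Cardinal.aleph 1).ord.ToType,
      ∃ y : ℝ, y ∉ ⋃ b ∈ Set.Iic a, N (e.symm b) := by
    intro a
    by_contra h
    push_neg at h
    have hsub : (Set.univ : Set ℝ) ⊆ ⋃ b ∈ Set.Iic a, N (e.symm b) := fun y _ => h y
    have := (measure_mono hsub).trans_eq (hU a)
    simp [Real.volume_univ] at this
  choose x hx using hex
  refine ⟨Set.range x, ?_, ?_⟩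
  · intro h0
    obtain ⟨c, hc, hc0⟩ := exists_code h0
    set a := e (Sum.inr c) with ha
    have h1 : x a ∈ decodeG c := hc ⟨a, rfl⟩
    apply hx a
    refine Set.mem_biUnion (le_refl a) ?_
    rw [ha, Equiv.symm_apply_apply]
    show x a ∈ (if volume (decodeG c) = 0 then decodeG c else ∅)
    rw [if_pos hc0]
    exact h1
  · intro t
    set a := e (Sum.inl t) with ha
    have hsub : Set.range x ∩ ((fun x => x + t) ⁻¹' cantorSet) ⊆ x '' Set.Iio a := by
      rintro y ⟨⟨b, rfl⟩, hmem⟩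
      refine ⟨b, ?_, rfl⟩
      by_contra hba
      apply hx b
      refine Set.mem_biUnion (show a ≤ b from le_of_not_gt fun h => hba h) ?_
      rw [ha, Equiv.symm_apply_apply]
      exact hmem
    exact (((hcntIio a).image x).mono hsub)

theorem stmt6 (hCH : Cardinal.continuum = Cardinal.aleph 1) :
    ∃ X : Set ℝ, 0 < volume X ∧
      (∀ t : ℝ, (cantorSet ∩ (fun x => x + t) '' X).Countable) ∧
      ∀ μ : Measure ℝ, IsProbabilityMeasure μ → μ cantorSetᶜ = 0 → (∀ x : ℝ, μ {x} = 0) →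
        ∀ t : ℝ, μ ((fun x => x + t) '' X) = 0 := by
  have hCH0 : (Cardinal.continuum : Cardinal.{0}) = Cardinal.aleph 1 := by
    apply Cardinal.lift_injective
    rw [Cardinal.lift_continuum, Cardinal.lift_aleph]
    simpa using hCH
  obtain ⟨X, hX0, hXc⟩ := main_construction hCH0
  have hkey : ∀ t : ℝ, (cantorSet ∩ (fun x => x + t) '' X).Countable := by
    intro t
    have heq : cantorSet ∩ (fun x => x + t) '' X
        = (fun x => x + t) '' (X ∩ (fun x => x + t) ⁻¹' cantorSet) := by
      ext y
      constructor
      · rintro ⟨hy, z, hz, rfl⟩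
        exact ⟨z, ⟨hz, hy⟩, rfl⟩
      · rintro ⟨z, ⟨hz, hzc⟩, rfl⟩
        exact ⟨hzc, z, hz, rfl⟩
    rw [heq]
    exact ((hXc t).image _)
  refine ⟨X, pos_iff_ne_zero.mpr hX0, hkey, ?_⟩
  intro μ hprob hcomp hatom t
  haveI : NullSingletonClass μ := ⟨hatom⟩
  have hsplit : (fun x => x + t) '' X ⊆
      (cantorSet ∩ (fun x => x + t) '' X) ∪ cantorSetᶜ := by
    intro y hy
    by_cases h : y ∈ cantorSet
    · exact Or.inl ⟨h, hy⟩
    · exact Or.inr h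
  refine le_antisymm ?_ zero_le
  calc μ ((fun x => x + t) '' X)
      ≤ μ ((cantorSet ∩ (fun x => x + t) '' X) ∪ cantorSetᶜ) := measure_mono hsplit
    _ ≤ μ (cantorSet ∩ (fun x => x + t) '' X) + μ cantorSetᶜ := measure_union_le _ _
    _ = 0 := by rw [(hkey t).measure_zero, hcomp, add_zero]
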